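/- Let Δ ⊂ ℝⁿ be a monotone polytope with interior lattice point 0, let f be a face of Δ with f = ∩_{i=1}^{d}{x ∈ Δ : xᵢ = −1} in suitable coordinates, and suppose λ ∈ 𝒮(Δ) satisfies −λ ∈ Star*(f) and λ ∉ Star(f). Then for every point u ∈ C(f, 0) = {r·0 + (1−r)y : r ∈ (0,1), y ∈ relint f}, u is displaceable by a probe in direction λ: writing −λ ∈ relint F ∖ star(f) for some facet F ⊇ f, the probe from the point w = C(f,−λ)-point corresponding to u in direction λ passes through u at less than half its affine length. -/

import Mathlib

open Finset

/-- Dot product of an integral vector with a real vector. -/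
def dotz {n : ℕ} (a : Fin n → ℤ) (x : Fin n → ℝ) : ℝ := ∑ i, (a i : ℝ) * x i

/-- `x` is a lattice point. -/
def IsLatticePt {n : ℕ} (x : Fin n → ℝ) : Prop := ∀ i, ∃ z : ℤ, x i = (z : ℝ)

/-- A nonzero integral vector is primitive. -/
def IsPrimitiveZ {n : ℕ} (a : Fin n → ℤ) : Prop :=
  a ≠ 0 ∧ ∀ d : ℤ, (∀ i, d ∣ a i) → IsUnit d

/-- A real vector that is a primitive integral vector. -/
def IsPrimIntVec {n : ℕ} (x : Fin n → ℝ) : Prop :=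
  ∃ a : Fin n → ℤ, IsPrimitiveZ a ∧ x = fun i => (a i : ℝ)

/-- `v` is a vertex (extreme point) of `Δ`. -/
def IsVertex {n : ℕ} (Δ : Set (Fin n → ℝ)) (v : Fin n → ℝ) : Prop :=
  v ∈ Δ ∧ IsExtreme ℝ Δ {v}

/-- `e` points from the vertex `v` along an edge (one-dimensional face) of `Δ`. -/
def IsEdgeDir {n : ℕ} (Δ : Set (Fin n → ℝ)) (v e : Fin n → ℝ) : Prop :=
  ∃ t : ℝ, 0 < t ∧ IsExtreme ℝ Δ (segment ℝ v (v + t • e))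

/-- The vertex-Fano condition at `v`, together with smoothness: the primitive integral
edge vectors `e i` at the vertex `v` form a `ℤ`-basis and satisfy `v + ∑ e i = u₀`. -/
def VertexFanoSmoothAt {n : ℕ} (Δ : Set (Fin n → ℝ)) (u₀ v : Fin n → ℝ) : Prop :=
  ∃ e : Fin n → (Fin n → ℝ), Function.Injective e ∧
    (∀ i, IsPrimIntVec (e i) ∧ IsEdgeDir Δ v (e i)) ∧
    (∀ z : Fin n → ℤ, ∃ c : Fin n → ℤ, (fun j => (z j : ℝ)) = ∑ i, (c i : ℝ) • e i) ∧
    v + ∑ i, e i = u₀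

/-- The set of indices of facets containing the face `⋂ i ∈ I, F i`. -/
def StarIdx {n N : ℕ} (F : Fin N → Set (Fin n → ℝ)) (I : Set (Fin N)) : Set (Fin N) :=
  {i | (⋂ i' ∈ I, F i') ⊆ F i}

/-- `Star(f)`: the union of the facets containing the face `f = ⋂ i ∈ I, F i`. -/
def StarU {n N : ℕ} (F : Fin N → Set (Fin n → ℝ)) (I : Set (Fin N)) : Set (Fin n → ℝ) :=
  ⋃ i ∈ StarIdx F I, F i

/-- `star(f)`: the union of the codimension-2 faces containing `f`. -/
def starLowerU {n N : ℕ} (F : Fin N → Set (Fin n → ℝ)) (I : Set (Fin N)) :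
    Set (Fin n → ℝ) :=
  ⋃ i ∈ StarIdx F I, ⋃ j ∈ StarIdx F I, ⋃ (_ : i ≠ j), F i ∩ F j

/-- The open cone `C(f, x)` from `x` over the relative interior of the face `f`. -/
def coneSet {n : ℕ} (f : Set (Fin n → ℝ)) (x : Fin n → ℝ) : Set (Fin n → ℝ) :=
  {p | ∃ r ∈ Set.Ioo (0 : ℝ) 1, ∃ y ∈ intrinsicInterior ℝ f, p = r • x + (1 - r) • y}

section Aux

lemma dotz_add {n : ℕ} (a : Fin n → ℤ) (x y : Fin n → ℝ) :
    dotz a (x + y) = dotz a x + dotz a y := by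
  simp [dotz, mul_add, Finset.sum_add_distrib]

lemma dotz_smul {n : ℕ} (a : Fin n → ℤ) (c : ℝ) (x : Fin n → ℝ) :
    dotz a (c • x) = c * dotz a x := by
  simp [dotz, Finset.mul_sum, mul_left_comm]

lemma dotz_sub {n : ℕ} (a : Fin n → ℤ) (x y : Fin n → ℝ) :
    dotz a (x - y) = dotz a x - dotz a y := by
  simp [dotz, mul_sub, Finset.sum_sub_distrib]

lemma dotz_neg {n : ℕ} (a : Fin n → ℤ) (x : Fin n → ℝ) :
    dotz a (-x) = -dotz a x := by
  simp [dotz, Finset.sum_neg_distrib]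

lemma dotz_continuous {n : ℕ} (a : Fin n → ℤ) : Continuous (dotz a) := by
  unfold dotz
  exact continuous_finset_sum _ fun i _ => continuous_const.mul (continuous_apply i)

lemma dotz_affine {n : ℕ} (a : Fin n → ℤ) (c : ℝ) (p₁ p₂ p₃ : Fin n → ℝ) :
    dotz a (c • (p₁ -ᵥ p₂) +ᵥ p₃) = c * (dotz a p₁ - dotz a p₂) + dotz a p₃ := by
  rw [vsub_eq_sub, vadd_eq_add, dotz_add, dotz_smul, dotz_sub]

lemma affineSpan_dotz_eq {n : ℕ} (a : Fin n → ℤ) (c : ℝ) {s : Set (Fin n → ℝ)}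
    (h : ∀ x ∈ s, dotz a x = c) : ∀ x ∈ affineSpan ℝ s, dotz a x = c := by
  intro x hx
  let Q : AffineSubspace ℝ (Fin n → ℝ) :=
    { carrier := {x | dotz a x = c}
      smul_vsub_vadd_mem' := by
        intro t p₁ p₂ p₃ h₁ h₂ h₃
        simp only [Set.mem_setOf_eq] at *
        rw [dotz_affine, h₁, h₂, h₃]
        ring }
  exact (affineSpan_le.2 (fun z hz => h z hz) : affineSpan ℝ s ≤ Q) hx

lemma mem_intrinsicInterior_ball {n : ℕ} {s : Set (Fin n → ℝ)} {x : Fin n → ℝ} :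
    x ∈ intrinsicInterior ℝ s ↔
      x ∈ s ∧ ∃ ε > 0, ∀ z ∈ affineSpan ℝ s, dist z x < ε → z ∈ s := by
  constructor
  · intro h
    obtain ⟨y, hy, rfl⟩ := mem_intrinsicInterior.1 h
    have hxs' : y ∈ (Subtype.val ⁻¹' s : Set (affineSpan ℝ s)) := interior_subset hy
    have hxs : (y : Fin n → ℝ) ∈ s := hxs'
    refine ⟨hxs, ?_⟩
    rw [mem_interior_iff_mem_nhds, Metric.mem_nhds_iff] at hy
    obtain ⟨ε, hε, hball⟩ := hy
    refine ⟨ε, hε, fun z hz hd => ?_⟩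
    exact hball (show (⟨z, hz⟩ : affineSpan ℝ s) ∈ Metric.ball y ε by
      simpa [Metric.mem_ball, Subtype.dist_eq] using hd)
  · rintro ⟨hxs, ε, hε, hball⟩
    have hxspan : x ∈ affineSpan ℝ s := subset_affineSpan ℝ s hxs
    refine mem_intrinsicInterior.2 ⟨⟨x, hxspan⟩, ?_, rfl⟩
    rw [mem_interior_iff_mem_nhds, Metric.mem_nhds_iff]
    refine ⟨ε, hε, fun z hz => ?_⟩
    exact hball z z.2 (by simpa [Metric.mem_ball, Subtype.dist_eq] using hz)

end Aux

/-- if `λ ∈ 𝒮(Δ)` satisfies `-λ ∈ Star*(f)` and `λ ∉ Star(f)`, then every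
point of the cone `C(f,0)` is displaceable by a probe in direction `λ` starting at a
point of `C(f,-λ)` in the relative interior of a facet containing `f`. -/
theorem cone_displaceable_by_probes {n N : ℕ}
    (η : Fin N → Fin n → ℤ) (hprim : ∀ i, IsPrimitiveZ (η i))
    (Δ : Set (Fin n → ℝ)) (hΔ : Δ = {x | ∀ i, dotz (η i) x ≤ 1})
    (hcpt : IsCompact Δ) (h0 : (0 : Fin n → ℝ) ∈ interior Δ)
    (huniq : ∀ w, IsLatticePt w → w ∈ interior Δ → w = 0)
    (hvlat : ∀ v, IsVertex Δ v → IsLatticePt v)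
    (hfano : ∀ v, IsVertex Δ v → VertexFanoSmoothAt Δ 0 v)
    (F : Fin N → Set (Fin n → ℝ)) (hF : ∀ i, F i = {x ∈ Δ | dotz (η i) x = 1})
    -- the face `f = ⋂ i ∈ I, F i`
    (I : Set (Fin N)) (hIne : I.Nonempty) (hfne : (⋂ i ∈ I, F i).Nonempty)
    -- `λ ∈ 𝒮(Δ)` with `-λ ∈ Star*(f)` and `λ ∉ Star(f)`
    (l : Fin n → ℤ) (hl0 : l ≠ 0)
    (hlΔ : (fun j => (l j : ℝ)) ∈ Δ) (hlΔ' : (fun j => -(l j : ℝ)) ∈ Δ)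
    (hlstar : (fun j => -(l j : ℝ)) ∈ StarU F I \ starLowerU F I)
    (hlnot : (fun j => (l j : ℝ)) ∉ StarU F I) :
    ∀ u ∈ coneSet (⋂ i ∈ I, F i) 0,
      ∃ i₀ ∈ StarIdx F I,
        ∃ w ∈ coneSet (⋂ i ∈ I, F i) (fun j => -(l j : ℝ)),
          w ∈ intrinsicInterior ℝ (F i₀) ∧
          |∑ j, l j * η i₀ j| = 1 ∧
          ∃ t : ℝ, 0 < t ∧ u = w + t • (fun j => (l j : ℝ)) ∧
            2 * t < sSup {s : ℝ | 0 ≤ s ∧ w + s • (fun j => (l j : ℝ)) ∈ Δ} := by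
  intro u hu
  obtain ⟨r, hr, y, hy, rfl⟩ := hu
  set lR : Fin n → ℝ := fun j => (l j : ℝ) with hlRdef
  set lN : Fin n → ℝ := fun j => -(l j : ℝ) with hlNdef
  have hlNR : lN = -lR := by funext j; simp [hlRdef, hlNdef]
  have hyf : y ∈ ⋂ i ∈ I, F i := intrinsicInterior_subset hy
  obtain ⟨i₁, hi₁⟩ := hIne
  have hfsubΔ : (⋂ i ∈ I, F i) ⊆ Δ := by
    intro z hz
    have hz1 : z ∈ F i₁ := Set.mem_iInter₂.1 hz i₁ hi₁
    rw [hF] at hz1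
    exact hz1.1
  have hyΔ : y ∈ Δ := hfsubΔ hyf
  have hymem : ∀ i, dotz (η i) y ≤ 1 := by rw [hΔ] at hyΔ; exact hyΔ
  -- strictness on the relative interior of the face
  have hstrict : ∀ i, i ∉ StarIdx F I → dotz (η i) y < 1 := by
    intro i hi
    rcases (hymem i).lt_or_eq with h | h
    · exact h
    exfalso
    obtain ⟨z, hzf, hzF⟩ := Set.not_subset.1 hi
    have hzΔ : z ∈ Δ := hfsubΔ hzf
    have hzle : dotz (η i) z ≤ 1 := by rw [hΔ] at hzΔ; exact hzΔ i
    have hzlt : dotz (η i) z < 1 := by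
      rcases hzle.lt_or_eq with h' | h'
      · exact h'
      · exact absurd (by rw [hF]; exact ⟨hzΔ, h'⟩) hzF
    obtain ⟨-, ε, hε, hball⟩ := mem_intrinsicInterior_ball.1 hy
    set δ : ℝ := ε / (2 * (dist y z + 1)) with hδdef
    have hdz0 : (0:ℝ) ≤ dist y z := dist_nonneg
    have hδ : 0 < δ := by positivity
    set q : Fin n → ℝ := δ • (y -ᵥ z) +ᵥ y with hqdef
    have hqspan : q ∈ affineSpan ℝ (⋂ i' ∈ I, F i') :=
      AffineSubspace.smul_vsub_vadd_mem _ δ (subset_affineSpan ℝ _ hyf)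
        (subset_affineSpan ℝ _ hzf) (subset_affineSpan ℝ _ hyf)
    have hδd : δ * (dist y z + 1) = ε / 2 := by
      rw [hδdef]; field_simp
    have hdist : dist q y < ε := by
      have h1 : q - y = δ • (y - z) := by
        rw [hqdef, vsub_eq_sub, vadd_eq_add]; abel
      have h2 : dist q y = δ * dist y z := by
        rw [dist_eq_norm, h1, norm_smul, dist_eq_norm]
        simp [abs_of_pos hδ]
      rw [h2]; nlinarith
    have hqf : q ∈ ⋂ i' ∈ I, F i' := hball q hqspan hdist
    have hqle : dotz (η i) q ≤ 1 := by
      have := hfsubΔ hqf; rw [hΔ] at this; exact this i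
    have hqval : dotz (η i) q = 1 + δ * (1 - dotz (η i) z) := by
      rw [hqdef, dotz_affine, h]; ring
    nlinarith
  -- choose the facet containing -λ
  have hlstar1 := hlstar.1
  rw [StarU, Set.mem_iUnion₂] at hlstar1
  obtain ⟨i₀, hi₀star, hi₀mem⟩ := hlstar1
  have hi₀sub : (⋂ i ∈ I, F i) ⊆ F i₀ := hi₀star
  have hlN1 : dotz (η i₀) lN = 1 := by rw [hF] at hi₀mem; exact hi₀mem.2
  have hlNle : ∀ i, dotz (η i) lN ≤ 1 := by rw [hΔ] at hlΔ'; exact hlΔ'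
  have hlRle : ∀ i, dotz (η i) lR ≤ 1 := by rw [hΔ] at hlΔ; exact hlΔ
  have hlRlt : ∀ i ∈ StarIdx F I, dotz (η i) lR < 1 := by
    intro i hi
    rcases (hlRle i).lt_or_eq with h | h
    · exact h
    · exact absurd (Set.mem_biUnion hi (by rw [hF]; exact ⟨hlΔ, h⟩)) hlnot
  set w : Fin n → ℝ := r • lN + (1 - r) • y with hwdef
  have hwdot : ∀ i, dotz (η i) w = r * dotz (η i) lN + (1 - r) * dotz (η i) y := by
    intro i; rw [hwdef, dotz_add, dotz_smul, dotz_smul]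
  have hwle : ∀ i, dotz (η i) w ≤ 1 := by
    intro i; rw [hwdot i]; nlinarith [hlNle i, hymem i, hr.1, hr.2]
  have hwΔ : w ∈ Δ := by rw [hΔ]; exact hwle
  have hy1 : dotz (η i₀) y = 1 := by
    have := hi₀sub hyf; rw [hF] at this; exact this.2
  have hw1 : dotz (η i₀) w = 1 := by rw [hwdot, hlN1, hy1]; ring
  have hwF : w ∈ F i₀ := by rw [hF]; exact ⟨hwΔ, hw1⟩
  have hwlt : ∀ i, i ≠ i₀ → dotz (η i) w < 1 := by
    intro i hne
    rcases (hwle i).lt_or_eq with h | h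
    · exact h
    exfalso
    rw [hwdot i] at h
    have ha : dotz (η i) lN = 1 := by
      by_contra hne'
      have : dotz (η i) lN < 1 := (hlNle i).lt_of_ne hne'
      nlinarith [hymem i, hr.1, hr.2]
    have hb : dotz (η i) y = 1 := by
      by_contra hne'
      have : dotz (η i) y < 1 := (hymem i).lt_of_ne hne'
      nlinarith [hlNle i, hr.1, hr.2]
    by_cases hS : i ∈ StarIdx F I
    · apply hlstar.2
      rw [starLowerU]
      simp only [Set.mem_iUnion]
      exact ⟨i, hS, i₀, hi₀star, hne, (by rw [hF]; exact ⟨hlΔ', ha⟩), hi₀mem⟩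
    · exact absurd hb (ne_of_lt (hstrict i hS))
  refine ⟨i₀, hi₀star, w, ⟨r, hr, y, hy, hwdef⟩, ?_, ?_, r, hr.1, ?_, ?_⟩
  · -- w ∈ intrinsicInterior ℝ (F i₀)
    have hUopen : IsOpen (⋂ i, {x : Fin n → ℝ | i ≠ i₀ → dotz (η i) x < 1}) := by
      refine isOpen_iInter_of_finite fun i => ?_
      by_cases h : i = i₀
      · subst h
        have : {x : Fin n → ℝ | i ≠ i → dotz (η i) x < 1} = Set.univ := by
          ext x; simp
        rw [this]; exact isOpen_univ
      · have : {x : Fin n → ℝ | i ≠ i₀ → dotz (η i) x < 1} = {x | dotz (η i) x < 1} := by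
          ext x; simp [h]
        rw [this]; exact isOpen_lt (dotz_continuous _) continuous_const
    have hwU : w ∈ ⋂ i, {x : Fin n → ℝ | i ≠ i₀ → dotz (η i) x < 1} :=
      Set.mem_iInter.2 fun i hne => hwlt i hne
    obtain ⟨ε, hε, hball⟩ := Metric.isOpen_iff.1 hUopen w hwU
    rw [mem_intrinsicInterior_ball]
    refine ⟨hwF, ε, hε, fun z hzspan hdz => ?_⟩
    have hz1 : dotz (η i₀) z = 1 :=
      affineSpan_dotz_eq (η i₀) 1 (fun x hx => by rw [hF] at hx; exact hx.2) z hzspan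
    have hzU := hball (show z ∈ Metric.ball w ε from Metric.mem_ball.2 hdz)
    have hzΔ : z ∈ Δ := by
      rw [hΔ]
      intro i
      by_cases h : i = i₀
      · rw [h, hz1]
      · exact le_of_lt (Set.mem_iInter.1 hzU i h)
    rw [hF]; exact ⟨hzΔ, hz1⟩
  · -- |∑ j, l j * η i₀ j| = 1
    have h1 : ∑ j, (η i₀ j : ℝ) * (-(l j : ℝ)) = 1 := by
      have := hlN1; rw [dotz] at this
      simpa [hlNdef] using this
    have h3 : ∑ j, (l j : ℝ) * (η i₀ j : ℝ) = -∑ j, (η i₀ j : ℝ) * (-(l j : ℝ)) := by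
      rw [← Finset.sum_neg_distrib]
      exact Finset.sum_congr rfl fun j _ => by ring
    have h2 : ((∑ j, l j * η i₀ j : ℤ) : ℝ) = -1 := by
      push_cast
      rw [h3, h1]
    have h4 : (∑ j, l j * η i₀ j : ℤ) = -1 := by exact_mod_cast h2
    rw [h4]; decide
  · -- u = w + r • lR
    funext j
    simp only [hwdef, hlRdef, hlNdef, Pi.add_apply, Pi.smul_apply, Pi.zero_apply,
      smul_eq_mul]
    ring
  · -- 2 * r < sSup
    have hp0 : ∀ i, dotz (η i) (w + (2 * r) • lR) < 1 := by
      intro i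
      have hlNval : dotz (η i) lN = -dotz (η i) lR := by rw [hlNR, dotz_neg]
      have hcalc : dotz (η i) (w + (2 * r) • lR)
          = r * dotz (η i) lR + (1 - r) * dotz (η i) y := by
        rw [dotz_add, dotz_smul, hwdot i, hlNval]; ring
      rw [hcalc]
      by_cases h : i ∈ StarIdx F I
      · nlinarith [hlRlt i h, hymem i, hr.1, hr.2]
      · nlinarith [hstrict i h, hlRle i, hr.1, hr.2]
    have hVopen : IsOpen (⋂ i, {x : Fin n → ℝ | dotz (η i) x < 1}) :=
      isOpen_iInter_of_finite fun i => isOpen_lt (dotz_continuous _) continuous_const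
    have hVΔ : (⋂ i, {x : Fin n → ℝ | dotz (η i) x < 1}) ⊆ Δ := by
      intro x hx; rw [hΔ]; exact fun i => le_of_lt (Set.mem_iInter.1 hx i)
    have hg : Continuous fun s : ℝ => w + s • lR := by
      exact continuous_const.add (continuous_id.smul continuous_const)
    have hpre : IsOpen ((fun s : ℝ => w + s • lR) ⁻¹' ⋂ i, {x | dotz (η i) x < 1}) :=
      hVopen.preimage hg
    have hmem2r : (2 * r) ∈ (fun s : ℝ => w + s • lR) ⁻¹' ⋂ i, {x | dotz (η i) x < 1} :=
      Set.mem_iInter.2 hp0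
    obtain ⟨δ, hδ, hball2⟩ := Metric.isOpen_iff.1 hpre (2 * r) hmem2r
    have hmemS : (2 * r + δ / 2) ∈ {s : ℝ | 0 ≤ s ∧ w + s • lR ∈ Δ} := by
      constructor
      · linarith [hr.1]
      · refine hVΔ (hball2 ?_)
        rw [Metric.mem_ball, Real.dist_eq]
        rw [show 2 * r + δ / 2 - 2 * r = δ / 2 by ring, abs_of_pos (by linarith)]
        linarith
    have hlRne : lR ≠ 0 := by
      intro h
      apply hl0
      funext j
      have h2 : (l j : ℝ) = 0 := by simpa [hlRdef] using congrFun h j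
      simpa using h2
    have hnl : 0 < ‖lR‖ := norm_pos_iff.2 hlRne
    obtain ⟨R, hR⟩ := isBounded_iff_forall_norm_le.1 hcpt.isBounded
    have hbdd : BddAbove {s : ℝ | 0 ≤ s ∧ w + s • lR ∈ Δ} := by
      refine ⟨(R + ‖w‖) / ‖lR‖, fun s hs => ?_⟩
      have h1 : ‖w + s • lR‖ ≤ R := hR _ hs.2
      have h2 : ‖s • lR‖ = s * ‖lR‖ := by
        rw [norm_smul, Real.norm_eq_abs, abs_of_nonneg hs.1]
      have h3 : ‖s • lR‖ ≤ ‖w + s • lR‖ + ‖w‖ := by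
        simpa using norm_sub_le (w + s • lR) w
      rw [le_div_iff₀ hnl]
      nlinarith
    calc 2 * r < 2 * r + δ / 2 := by linarith
      _ ≤ sSup {s : ℝ | 0 ≤ s ∧ w + s • lR ∈ Δ} := le_csSup hbdd hmemS
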